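/- arXiv:math/0209295 — 3 statements merged into one kernel-verified Lean document; each statement's English description precedes it below -/
import Mathlib

section
/- Let 0 < α < 1, 0 < β < 1 and α + β ≥ 1, and let φ ∈ S_α^β(1). Then the Laplace transform L(φ)(z) := ∫_ℝ e^{−zt} φ(t) dt (the integral converges absolutely for every z ∈ ℂ) defines an entire function belonging to J*S_β^α, i.e. there exist constants C > 0 and a > 0, b > 0 such that |L(φ)(x+iy)| ≤ C·exp(−a|y|^{1/β} + b|x|^{1/(1−α)}) for all x, y ∈ ℝ. -/
open Complex MeasureTheory

noncomputable section

/-- One-dimensional Gelfand–Shilov space `S_α^β(1)`. -/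
def GelfandShilov1 (α β : ℝ) (φ : ℂ → ℂ) : Prop :=
  Differentiable ℂ φ ∧
  ∃ C : ℝ, 0 < C ∧ ∃ a : ℝ, 0 < a ∧ ∃ b : ℝ, 0 < b ∧
    ∀ x y : ℝ,
      ‖φ ((x : ℂ) + (y : ℂ) * Complex.I)‖ ≤
        C * Real.exp (-a * |x| ^ (1 / α) + b * |y| ^ (1 / (1 - β)))

/-- The Laplace transform `L(φ)(z) = ∫ℝ e^{-zt} φ(t) dt`. -/
def LaplaceT (φ : ℂ → ℂ) (z : ℂ) : ℂ :=
  ∫ t : ℝ, Complex.exp (-z * (t : ℂ)) * φ (t : ℂ)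

section Aux
open Filter Real Set intervalIntegral


/-- Young-type bound: for `u ≥ 0`, `R u - c u^p ≤ R u₀ - (c/2) u^p`. -/
lemma young_aux {R c p : ℝ} (hR : 0 ≤ R) (hc : 0 < c) (hp : 1 < p) {u : ℝ} (hu : 0 ≤ u) :
    R * u - c * u ^ p ≤ R * (2 * R / c) ^ (p - 1)⁻¹ - c / 2 * u ^ p := by
  set u₀ : ℝ := (2 * R / c) ^ (p - 1)⁻¹ with hu₀
  have hu₀0 : 0 ≤ u₀ := Real.rpow_nonneg (by positivity) _
  have hup0 : (0:ℝ) ≤ u ^ p := Real.rpow_nonneg hu _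
  rcases le_total u u₀ with h | h
  · have h1 : R * u ≤ R * u₀ := mul_le_mul_of_nonneg_left h hR
    nlinarith
  · rcases eq_or_lt_of_le hu with h0 | h0
    · have : u₀ ≤ 0 := h0 ▸ h
      have : u₀ = 0 := le_antisymm this hu₀0
      rw [← h0, this]
      rw [Real.zero_rpow (by positivity : p ≠ 0)]
      simp
    · have hp1 : p - 1 ≠ 0 := by nlinarith
      have hkey : 2 * R / c ≤ u ^ (p - 1) := by
        have := Real.rpow_le_rpow hu₀0 h (by nlinarith : (0:ℝ) ≤ p - 1)
        rwa [hu₀, Real.rpow_inv_rpow (by positivity) hp1] at this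
      have hRu : R * u ≤ c / 2 * u ^ p := by
        have h2 : R ≤ c / 2 * u ^ (p - 1) := by
          rw [div_le_iff₀ hc] at hkey
          nlinarith
        have h3 : u ^ (p - 1) * u = u ^ p := by
          nth_rewrite 2 [← Real.rpow_one u]
          rw [← Real.rpow_add h0, sub_add_cancel]
        calc R * u ≤ c / 2 * u ^ (p - 1) * u :=
              mul_le_mul_of_nonneg_right h2 hu
          _ = c / 2 * u ^ p := by rw [mul_assoc, h3]
      nlinarith [mul_nonneg hR hu₀0]

lemma tendsto_RcP {R c p : ℝ} (hR : 0 ≤ R) (hc : 0 < c) (hp : 1 < p) :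
    Tendsto (fun w : ℝ => R * w - c * w ^ p) atTop atBot := by
  have hp0 : 0 < p := by linarith
  have h1 : Tendsto (fun w : ℝ => c / 2 * w ^ p) atTop atTop :=
    (tendsto_rpow_atTop hp0).const_mul_atTop (by positivity)
  have h2 : Tendsto (fun w : ℝ => R * (2 * R / c) ^ (p - 1)⁻¹ - c / 2 * w ^ p) atTop atBot := by
    simpa [sub_eq_add_neg] using
      tendsto_atBot_add_const_left atTop (R * (2 * R / c) ^ (p - 1)⁻¹)
        (tendsto_neg_atTop_atBot.comp h1)
  refine tendsto_atBot_mono' atTop ?_ h2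
  filter_upwards [eventually_ge_atTop (0:ℝ)] with w hw
  exact young_aux hR hc hp hw

lemma tendsto_exp_maj_atTop {R c p : ℝ} (hR : 0 ≤ R) (hc : 0 < c) (hp : 1 < p) :
    Tendsto (fun t : ℝ => Real.exp (R * |t| - c * |t| ^ p)) atTop (nhds 0) :=
  Real.tendsto_exp_atBot.comp ((tendsto_RcP hR hc hp).comp tendsto_abs_atTop_atTop)

lemma tendsto_exp_maj_atBot {R c p : ℝ} (hR : 0 ≤ R) (hc : 0 < c) (hp : 1 < p) :
    Tendsto (fun t : ℝ => Real.exp (R * |t| - c * |t| ^ p)) atBot (nhds 0) :=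
  Real.tendsto_exp_atBot.comp ((tendsto_RcP hR hc hp).comp tendsto_abs_atBot_atTop)

/-- Integrability of `exp (-c |t|^p)` over ℝ. -/
lemma integrable_exp_neg_abs_rpow {c p : ℝ} (hc : 0 < c) (hp : 1 < p) :
    Integrable (fun t : ℝ => Real.exp (-c * |t| ^ p)) := by
  have hIoi : IntegrableOn (fun t : ℝ => Real.exp (-c * |t| ^ p)) (Ioi 0) := by
    have h := integrableOn_rpow_mul_exp_neg_mul_rpow
      (by norm_num : (-1:ℝ) < 0) (by linarith : (0:ℝ) < p) hc
    refine h.congr_fun (fun x hx => ?_) measurableSet_Ioi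
    rw [Set.mem_Ioi] at hx
    beta_reduce
    rw [Real.rpow_zero, one_mul, abs_of_pos hx]
  have hIic : IntegrableOn (fun t : ℝ => Real.exp (-c * |t| ^ p)) (Iic 0) := by
    rw [← Measure.map_neg_eq_self (volume : Measure ℝ)]
    let m : MeasurableEmbedding fun x : ℝ => -x := (Homeomorph.neg ℝ).measurableEmbedding
    rw [m.integrableOn_map_iff]
    simp_rw [Function.comp_def, abs_neg, neg_preimage, neg_Iic, neg_zero]
    exact Iff.mpr integrableOn_Ici_iff_integrableOn_Ioi hIoi
  have := hIic.union hIoi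
  rw [Iic_union_Ioi] at this
  rwa [← integrableOn_univ]

/-- Integrability of the majorant `exp (R|t| - c|t|^p)`. -/
lemma integrable_exp_maj {R c p : ℝ} (hR : 0 ≤ R) (hc : 0 < c) (hp : 1 < p) :
    Integrable (fun t : ℝ => Real.exp (R * |t| - c * |t| ^ p)) := by
  have h := (integrable_exp_neg_abs_rpow (c := c/2) (by positivity) hp).const_mul
    (Real.exp (R * (2 * R / c) ^ (p - 1)⁻¹))
  refine h.mono' ?_ ?_
  · apply Continuous.aestronglyMeasurable
    exact Real.continuous_exp.comp ((continuous_const.mul _root_.continuous_abs).sub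
      (continuous_const.mul (_root_.continuous_abs.rpow_const (fun _ => Or.inr (by linarith)))))
  · filter_upwards with t
    rw [Real.norm_eq_abs, abs_of_pos (Real.exp_pos _), ← Real.exp_add, Real.exp_le_exp]
    have := young_aux hR hc hp (abs_nonneg t)
    linarith


lemma horiz_shift {f : ℂ → ℂ} (hf : Differentiable ℂ f) (s : ℝ) {g : ℝ → ℝ}
    (hbound : ∀ u v : ℝ, |v| ≤ |s| → ‖f (u + v * I)‖ ≤ g u)
    (hgTop : Tendsto g atTop (nhds 0)) (hgBot : Tendsto g atBot (nhds 0))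
    (hint0 : Integrable (fun t : ℝ => f t))
    (hints : Integrable (fun t : ℝ => f (t + s * I))) :
    ∫ t : ℝ, f ((t : ℂ) + (s : ℂ) * I) = ∫ t : ℝ, f t := by
  set I₁ : ℝ → ℂ := fun T => ∫ x : ℝ in (-T)..T, f x with hI₁
  set I₂ : ℝ → ℂ := fun T => ∫ x : ℝ in (-T)..T, f ((x : ℂ) + (s : ℂ) * I) with hI₂
  have rect : ∀ T : ℝ, I₁ T - I₂ T =
      I • (∫ y : ℝ in (0:ℝ)..s, f ((-T : ℝ) + (y : ℂ) * I)) -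
      I • (∫ y : ℝ in (0:ℝ)..s, f ((T : ℝ) + (y : ℂ) * I)) := by
    intro T
    have H := integral_boundary_rect_eq_zero_of_differentiableOn f ((-T : ℝ) : ℂ)
      ((T : ℂ) + (s : ℂ) * I) hf.differentiableOn
    simp only [ofReal_re, ofReal_im, add_re, add_im, mul_re, mul_im, I_re, I_im,
      ofReal_neg, neg_re, neg_im, mul_zero, mul_one, zero_mul, sub_zero, zero_add, add_zero,
      ofReal_zero, neg_zero, zero_sub, neg_neg] at H
    rw [ofReal_neg]
    simp only [smul_eq_mul] at H ⊢
    linear_combination H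
  have key : Tendsto (fun T => I₁ T - I₂ T) atTop
      (nhds ((∫ t : ℝ, f t) - ∫ t : ℝ, f ((t : ℂ) + (s : ℂ) * I))) :=
    (intervalIntegral_tendsto_integral hint0 tendsto_neg_atTop_atBot tendsto_id).sub
      (intervalIntegral_tendsto_integral hints tendsto_neg_atTop_atBot tendsto_id)
  have hg0 : Tendsto (fun T : ℝ => (g (-T) + g T) * |s|) atTop (nhds 0) := by
    have : Tendsto (fun T : ℝ => g (-T) + g T) atTop (nhds (0 + 0)) :=
      ((hgBot.comp tendsto_neg_atTop_atBot).add hgTop)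
    simpa using this.mul_const |s|
  have key0 : Tendsto (fun T => I₁ T - I₂ T) atTop (nhds 0) := by
    rw [tendsto_zero_iff_norm_tendsto_zero]
    have huIoc : ∀ y : ℝ, y ∈ Set.uIoc (0:ℝ) s → |y| ≤ |s| := by
      intro y hy
      rcases Set.mem_uIoc.mp hy with h | h
      · rw [abs_le]
        constructor
        · linarith [h.1, le_abs_self s, neg_abs_le s]
        · exact h.2.trans (le_abs_self s)
      · rw [abs_le]
        constructor
        · linarith [h.1, neg_abs_le s]
        · linarith [h.2, abs_nonneg s]
    have hb : ∀ T : ℝ, ‖I₁ T - I₂ T‖ ≤ (g (-T) + g T) * |s| := by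
      intro T
      rw [rect T]
      have h1 : ‖∫ y : ℝ in (0:ℝ)..s, f ((-T : ℝ) + (y : ℂ) * I)‖ ≤ g (-T) * |s - 0| := by
        apply intervalIntegral.norm_integral_le_of_norm_le_const
        intro y hy
        exact hbound (-T) y (huIoc y hy)
      have h2 : ‖∫ y : ℝ in (0:ℝ)..s, f ((T : ℝ) + (y : ℂ) * I)‖ ≤ g T * |s - 0| := by
        apply intervalIntegral.norm_integral_le_of_norm_le_const
        intro y hy
        exact hbound T y (huIoc y hy)
      rw [sub_zero] at h1 h2
      calc ‖I • (∫ y : ℝ in (0:ℝ)..s, f ((-T : ℝ) + (y : ℂ) * I)) -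
            I • (∫ y : ℝ in (0:ℝ)..s, f ((T : ℝ) + (y : ℂ) * I))‖
          ≤ ‖I • (∫ y : ℝ in (0:ℝ)..s, f ((-T : ℝ) + (y : ℂ) * I))‖ +
            ‖I • (∫ y : ℝ in (0:ℝ)..s, f ((T : ℝ) + (y : ℂ) * I))‖ := norm_sub_le _ _
        _ ≤ g (-T) * |s| + g T * |s| := by
            simp only [smul_eq_mul, norm_mul, Complex.norm_I, one_mul]
            exact add_le_add h1 h2
        _ = (g (-T) + g T) * |s| := by ring
    refine tendsto_of_tendsto_of_tendsto_of_le_of_le' tendsto_const_nhds hg0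
      (Eventually.of_forall fun T => norm_nonneg _) (Eventually.of_forall hb)
  have := tendsto_nhds_unique key key0
  rw [sub_eq_zero] at this
  exact this.symm

end Aux

set_option maxHeartbeats 1000000 in
open Filter Real Set intervalIntegral in
theorem laplace_mem_JstarS
    (α β : ℝ) (hα : 0 < α ∧ α < 1) (hβ : 0 < β ∧ β < 1) (hαβ : 1 ≤ α + β)
    (φ : ℂ → ℂ) (hφ : GelfandShilov1 α β φ) :
    (∀ z : ℂ, Integrable (fun t : ℝ => Complex.exp (-z * (t : ℂ)) * φ (t : ℂ))) ∧
    Differentiable ℂ (LaplaceT φ) ∧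
    ∃ C : ℝ, 0 < C ∧ ∃ a : ℝ, 0 < a ∧ ∃ b : ℝ, 0 < b ∧
      ∀ x y : ℝ,
        ‖LaplaceT φ ((x : ℂ) + (y : ℂ) * Complex.I)‖ ≤
          C * Real.exp (-a * |y| ^ (1 / β) + b * |x| ^ (1 / (1 - α))) := by
  obtain ⟨hα0, hα1⟩ := hα
  obtain ⟨hβ0, hβ1⟩ := hβ
  obtain ⟨hd, C, hC, a, ha, b, hb, hbd⟩ := hφ
  set p : ℝ := 1 / α with hp_def
  set q : ℝ := 1 / (1 - β) with hq_def
  have hp : 1 < p := one_lt_one_div hα0 hα1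
  have hq : 1 < q := one_lt_one_div (by linarith) (by linarith)
  have hp0 : (0:ℝ) < p := by linarith
  have hq0 : (0:ℝ) < q := by linarith
  -- absolute value of the integrand
  have habsF : ∀ (z : ℂ) (u v : ℝ),
      ‖Complex.exp (-z * ((u:ℂ) + (v:ℂ) * I)) * φ ((u:ℂ) + (v:ℂ) * I)‖ =
      Real.exp (-(z.re * u) + z.im * v) * ‖φ ((u:ℂ) + (v:ℂ) * I)‖ := by
    intro z u v
    rw [norm_mul, Complex.norm_exp]
    congr 2
    simp [Complex.mul_re]
    ring
  have hbnd : ∀ (z : ℂ) (u v : ℝ),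
      ‖Complex.exp (-z * ((u:ℂ) + (v:ℂ) * I)) * φ ((u:ℂ) + (v:ℂ) * I)‖ ≤
      C * Real.exp (|z.re| * |u| - a * |u| ^ p + (z.im * v + b * |v| ^ q)) := by
    intro z u v
    rw [habsF]
    calc Real.exp (-(z.re * u) + z.im * v) * ‖φ ((u:ℂ) + (v:ℂ) * I)‖
        ≤ Real.exp (-(z.re * u) + z.im * v) * (C * Real.exp (-a * |u| ^ p + b * |v| ^ q)) := by
          apply mul_le_mul_of_nonneg_left (hbd u v) (le_of_lt (Real.exp_pos _))
      _ ≤ C * Real.exp (|z.re| * |u| - a * |u| ^ p + (z.im * v + b * |v| ^ q)) := by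
          rw [mul_comm, mul_assoc, ← Real.exp_add]
          apply mul_le_mul_of_nonneg_left _ hC.le
          rw [Real.exp_le_exp]
          have : -(z.re * u) ≤ |z.re| * |u| := by
            rw [← abs_mul]
            exact neg_le_abs _
          linarith
  have hbnd0 : ∀ (z : ℂ) (t : ℝ),
      ‖Complex.exp (-z * (t:ℂ)) * φ (t:ℂ)‖ ≤
      C * Real.exp (|z.re| * |t| - a * |t| ^ p) := by
    intro z t
    have := hbnd z t 0
    simpa [Real.zero_rpow (by positivity : q ≠ 0)] using this
  have hcont : ∀ z : ℂ, Continuous (fun t : ℝ => Complex.exp (-z * (t:ℂ)) * φ (t:ℂ)) := by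
    intro z
    exact (Complex.continuous_exp.comp (continuous_const.mul Complex.continuous_ofReal)).mul
      (hd.continuous.comp Complex.continuous_ofReal)
  have hInt : ∀ z : ℂ, Integrable (fun t : ℝ => Complex.exp (-z * (t:ℂ)) * φ (t:ℂ)) := by
    intro z
    refine ((integrable_exp_maj (R := |z.re|) (abs_nonneg _) ha hp).const_mul C).mono'
      (hcont z).aestronglyMeasurable ?_
    filter_upwards with t
    exact hbnd0 z t
  refine ⟨hInt, ?_, ?_⟩
  · -- differentiability
    intro z₀
    have key := _root_.hasDerivAt_integral_of_dominated_loc_of_deriv_le (s := Metric.ball z₀ 1) (Metric.ball_mem_nhds z₀ one_pos)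
      (F := fun (z : ℂ) (t : ℝ) => Complex.exp (-z * (t:ℂ)) * φ (t:ℂ))
      (F' := fun (z : ℂ) (t : ℝ) => Complex.exp (-z * (t:ℂ)) * (-1 * (t:ℂ)) * φ (t:ℂ))
      (bound := fun t : ℝ => C * Real.exp ((|z₀.re| + 2) * |t| - a * |t| ^ p))
      (Eventually.of_forall fun z => (hcont z).aestronglyMeasurable)
      (hInt z₀)
      (Continuous.aestronglyMeasurable (by
        exact ((Complex.continuous_exp.comp (continuous_const.mul Complex.continuous_ofReal)).mul
          (continuous_const.mul Complex.continuous_ofReal)).mul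
          (hd.continuous.comp Complex.continuous_ofReal)))
      ?_ ?_ ?_
    · exact key.2.differentiableAt
    · -- bound on the derivative
      filter_upwards with t
      intro z hz
      have hzre : |z.re| ≤ |z₀.re| + 1 := by
        have h1 : |z.re - z₀.re| ≤ ‖z - z₀‖ := by
          have := Complex.abs_re_le_norm (z - z₀)
          simpa using this
        have h2 : ‖z - z₀‖ < 1 := by
          rw [Metric.mem_ball, Complex.dist_eq] at hz
          exact hz
        have := abs_sub_abs_le_abs_sub z.re z₀.re
        linarith [abs_sub_abs_le_abs_sub z.re z₀.re, h1.trans h2.le]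
      rw [norm_mul, norm_mul]
      have h3 : ‖-1 * (t:ℂ)‖ = |t| := by
        simp
      rw [h3]
      have h4 : ‖Complex.exp (-z * (t:ℂ))‖ * ‖φ (t:ℂ)‖ ≤
          C * Real.exp (|z.re| * |t| - a * |t| ^ p) := by
        rw [← norm_mul]
        exact hbnd0 z t
      calc ‖Complex.exp (-z * (t:ℂ))‖ * |t| * ‖φ (t:ℂ)‖
          = |t| * (‖Complex.exp (-z * (t:ℂ))‖ * ‖φ (t:ℂ)‖) := by ring
        _ ≤ |t| * (C * Real.exp (|z.re| * |t| - a * |t| ^ p)) := by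
            apply mul_le_mul_of_nonneg_left h4 (abs_nonneg t)
        _ ≤ Real.exp |t| * (C * Real.exp ((|z₀.re| + 1) * |t| - a * |t| ^ p)) := by
            apply mul_le_mul
            · linarith [Real.add_one_le_exp |t|, abs_nonneg t]
            · apply mul_le_mul_of_nonneg_left _ hC.le
              rw [Real.exp_le_exp]
              have := mul_le_mul_of_nonneg_right hzre (abs_nonneg t)
              linarith
            · positivity
            · positivity
        _ = C * Real.exp ((|z₀.re| + 2) * |t| - a * |t| ^ p) := by
            rw [← mul_assoc, mul_comm (Real.exp |t|) C, mul_assoc, ← Real.exp_add]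
            ring_nf
    · exact (integrable_exp_maj (R := |z₀.re| + 2) (by positivity) ha hp).const_mul C
    · -- differentiability of the integrand in z
      filter_upwards with t
      intro z hz
      exact (((hasDerivAt_id z).neg.mul_const (t:ℂ)).cexp).mul_const (φ (t:ℂ))
  · -- the decay estimate
    have hq1 : (0:ℝ) < q - 1 := by linarith
    have hβne : (1:ℝ) - β ≠ 0 := by linarith
    have hβne' : β ≠ 0 := by linarith
    have hαne : α ≠ 0 := by linarith
    have hαne' : (1:ℝ) - α ≠ 0 := by linarith
    have hp1 : (0:ℝ) < p - 1 := by linarith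
    set w : ℝ := (q - 1)⁻¹ with hw_def
    set w' : ℝ := (p - 1)⁻¹ with hw'_def
    have hw0 : 0 < w := by positivity
    have hw'0 : 0 < w' := by positivity
    have hwq : 1 + w = 1 / β := by
      have h1 : q - 1 = β / (1 - β) := by
        rw [hq_def]; field_simp; ring
      rw [hw_def, h1]
      field_simp; ring
    have hwp : 1 + w' = 1 / (1 - α) := by
      have h1 : p - 1 = (1 - α) / α := by
        rw [hp_def]; field_simp
      rw [hw'_def, h1]
      rw [inv_div]
      field_simp; ring
    set K : ℝ := ∫ t : ℝ, Real.exp (-(a/2) * |t| ^ p) with hK_def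
    have hK0 : 0 ≤ K := integral_nonneg (fun t => (Real.exp_pos _).le)
    have hKint : Integrable (fun t : ℝ => Real.exp (-(a/2) * |t| ^ p)) :=
      integrable_exp_neg_abs_rpow (by positivity) hp
    refine ⟨C * K + 1, by positivity, 1/2 * ((2*b) ^ w)⁻¹, by positivity,
      (2/a) ^ w', by positivity, ?_⟩
    intro x y
    set z : ℂ := (x : ℂ) + (y : ℂ) * I with hz_def
    have hz_re : z.re = x := by simp [hz_def]
    have hz_im : z.im = y := by simp [hz_def]
    set s₀ : ℝ := (|y| / (2*b)) ^ w with hs₀_def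
    set u₀ : ℝ := (2 * |x| / a) ^ w' with hu₀_def
    have hs₀0 : 0 ≤ s₀ := Real.rpow_nonneg (by positivity) _
    have hu₀0 : 0 ≤ u₀ := Real.rpow_nonneg (by positivity) _
    set s : ℝ := if 0 ≤ y then -s₀ else s₀ with hs_def
    have habs_s : |s| = s₀ := by
      rw [hs_def]
      split_ifs
      · rw [_root_.abs_neg, _root_.abs_of_nonneg hs₀0]
      · rw [_root_.abs_of_nonneg hs₀0]
    have hys : y * s = -(|y| * s₀) := by
      rw [hs_def]
      split_ifs with h
      · rw [_root_.abs_of_nonneg h]; ring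
      · rw [abs_of_neg (not_le.mp h)]; ring
    have hbs : b * s₀ ^ q = |y| / 2 * s₀ := by
      rcases eq_or_ne y 0 with hy0 | hy0
      · have : s₀ = 0 := by
          rw [hs₀_def, hy0, abs_zero, zero_div, Real.zero_rpow (by positivity : w ≠ 0)]
        rw [this, Real.zero_rpow (by positivity : q ≠ 0)]
        ring
      · have hy0' : 0 < |y| := abs_pos.mpr hy0
        have hs₀p : 0 < s₀ := Real.rpow_pos_of_pos (by positivity) _
        have h1 : s₀ ^ (q - 1) = |y| / (2*b) := by
          rw [hs₀_def, hw_def, Real.rpow_inv_rpow (by positivity) (by positivity : q - 1 ≠ 0)]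
        have h2 : s₀ ^ q = s₀ ^ (q - 1) * s₀ := by
          nth_rewrite 3 [← Real.rpow_one s₀]
          rw [← Real.rpow_add hs₀p, sub_add_cancel]
        rw [h2, h1]
        field_simp
    have hys2 : |y| * s₀ = |y| ^ (1/β) * ((2*b) ^ w)⁻¹ := by
      rw [hs₀_def, Real.div_rpow (abs_nonneg y) (by positivity)]
      rw [← hwq, Real.rpow_one_add' (abs_nonneg y) (by positivity)]
      field_simp
    have hxu : |x| * u₀ = (2/a) ^ w' * |x| ^ (1/(1-α)) := by
      rw [hu₀_def, show 2 * |x| / a = 2/a * |x| by ring,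
        Real.mul_rpow (by positivity) (abs_nonneg x)]
      rw [← hwp, Real.rpow_one_add' (abs_nonneg x) (by positivity)]
      ring
    -- the shifted integrand and its bound
    set f : ℂ → ℂ := fun ζ => Complex.exp (-z * ζ) * φ ζ with hf_def
    have hfdiff : Differentiable ℂ f :=
      ((differentiable_id.const_mul (-z)).cexp).mul hd
    set Cm : ℝ := C * Real.exp (|y| * s₀ + b * s₀ ^ q) with hCm_def
    have hCm0 : 0 < Cm := by positivity
    set g : ℝ → ℝ := fun u => Cm * Real.exp (|x| * |u| - a * |u| ^ p) with hg_def
    have hboundg : ∀ u v : ℝ, |v| ≤ |s| → ‖f ((u:ℂ) + (v:ℂ) * I)‖ ≤ g u := by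
      intro u v hv
      rw [habs_s] at hv
      refine (hbnd z u v).trans ?_
      simp only [hg_def, hCm_def, hz_re, hz_im]
      rw [mul_assoc, ← Real.exp_add]
      apply mul_le_mul_of_nonneg_left _ hC.le
      rw [Real.exp_le_exp]
      have h1 : y * v ≤ |y| * s₀ := by
        calc y * v ≤ |y * v| := le_abs_self _
          _ = |y| * |v| := abs_mul _ _
          _ ≤ |y| * s₀ := mul_le_mul_of_nonneg_left hv (abs_nonneg y)
      have h2 : b * |v| ^ q ≤ b * s₀ ^ q :=
        mul_le_mul_of_nonneg_left (Real.rpow_le_rpow (abs_nonneg v) hv hq0.le) hb.le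
      linarith
    have hgTop : Tendsto g atTop (nhds 0) := by
      have := (tendsto_exp_maj_atTop (abs_nonneg x) ha hp).const_mul Cm
      simpa using this
    have hgBot : Tendsto g atBot (nhds 0) := by
      have := (tendsto_exp_maj_atBot (abs_nonneg x) ha hp).const_mul Cm
      simpa using this
    have hgint : Integrable g :=
      (integrable_exp_maj (abs_nonneg x) ha hp).const_mul Cm
    have hfc : Continuous f :=
      (Complex.continuous_exp.comp (continuous_const.mul continuous_id)).mul hd.continuous
    have hints : Integrable (fun t : ℝ => f ((t:ℂ) + (s:ℂ) * I)) := by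
      refine hgint.mono' (Continuous.aestronglyMeasurable
        (hfc.comp (Complex.continuous_ofReal.add continuous_const))) ?_
      filter_upwards with t
      exact hboundg t s le_rfl
    have hshift : ∫ t : ℝ, f ((t:ℂ) + (s:ℂ) * I) = ∫ t : ℝ, f (t:ℂ) :=
      horiz_shift hfdiff s hboundg hgTop hgBot (hInt z) hints
    have hL : LaplaceT φ z = ∫ t : ℝ, f ((t:ℂ) + (s:ℂ) * I) := by
      rw [hshift]; rfl
    set E : ℝ := y * s + b * s₀ ^ q + |x| * u₀ with hE_def
    have hptwise : ∀ t : ℝ, ‖f ((t:ℂ) + (s:ℂ) * I)‖ ≤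
        C * Real.exp E * Real.exp (-(a/2) * |t| ^ p) := by
      intro t
      refine (hbnd z t s).trans ?_
      rw [mul_assoc, ← Real.exp_add]
      apply mul_le_mul_of_nonneg_left _ hC.le
      rw [Real.exp_le_exp, habs_s]
      have hy := young_aux (abs_nonneg x) ha hp (abs_nonneg t)
      rw [hz_re, hz_im]
      rw [hE_def, hu₀_def]
      rw [hw'_def]
      linarith [hy]
    have hEbound : E ≤ -(1/2 * ((2*b) ^ w)⁻¹) * |y| ^ (1/β) + (2/a) ^ w' * |x| ^ (1/(1-α)) := by
      have hE2 : E = -(1/2) * (|y| * s₀) + |x| * u₀ := by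
        rw [hE_def, hys, hbs]; ring
      rw [hE2, hys2, hxu]
      exact le_of_eq (by ring)
    calc ‖LaplaceT φ z‖
        = ‖∫ t : ℝ, f ((t:ℂ) + (s:ℂ) * I)‖ := by rw [hL]
      _ ≤ ∫ t : ℝ, ‖f ((t:ℂ) + (s:ℂ) * I)‖ := norm_integral_le_integral_norm _
      _ ≤ ∫ t : ℝ, C * Real.exp E * Real.exp (-(a/2) * |t| ^ p) := by
          refine integral_mono hints.norm (hKint.const_mul _) hptwise
      _ = C * Real.exp E * K := integral_const_mul _ _
      _ ≤ (C * K + 1) * Real.exp (-(1/2 * ((2*b) ^ w)⁻¹) * |y| ^ (1/β) +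
            (2/a) ^ w' * |x| ^ (1/(1-α))) := by
          have h1 : Real.exp E ≤ Real.exp (-(1/2 * ((2*b) ^ w)⁻¹) * |y| ^ (1/β) +
              (2/a) ^ w' * |x| ^ (1/(1-α))) := Real.exp_le_exp.mpr hEbound
          calc C * Real.exp E * K = (C * K) * Real.exp E := by ring
            _ ≤ (C * K) * Real.exp (-(1/2 * ((2*b) ^ w)⁻¹) * |y| ^ (1/β) +
                (2/a) ^ w' * |x| ^ (1/(1-α))) :=
                mul_le_mul_of_nonneg_left h1 (by positivity)
            _ ≤ (C * K + 1) * Real.exp (-(1/2 * ((2*b) ^ w)⁻¹) * |y| ^ (1/β) +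
                (2/a) ^ w' * |x| ^ (1/(1-α))) := by
                have := Real.exp_pos (-(1/2 * ((2*b) ^ w)⁻¹) * |y| ^ (1/β) +
                  (2/a) ^ w' * |x| ^ (1/(1-α)))
                nlinarith
end
end

section
/- Let 0 < α < 1, 0 < β < 1 and α + β ≥ 1. Then the Laplace transformation φ ↦ L(φ), where L(φ)(z) := ∫_ℝ e^{−zt} φ(t) dt, is a bijection from S_α^β(1) onto J*S_β^α: it is injective on S_α^β(1), and for every f ∈ J*S_β^α there exists φ ∈ S_α^β(1) with L(φ) = f. -/
open Complex MeasureTheory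

noncomputable section

/-- The space `J*S_β^α`: entire functions `f` with
`|f(x+iy)| ≤ C exp(-a |y|^{1/β} + b |x|^{1/(1-α)})`. -/
def JstarS (β α : ℝ) (f : ℂ → ℂ) : Prop :=
  Differentiable ℂ f ∧
  ∃ C : ℝ, 0 < C ∧ ∃ a : ℝ, 0 < a ∧ ∃ b : ℝ, 0 < b ∧
    ∀ x y : ℝ,
      ‖f ((x : ℂ) + (y : ℂ) * Complex.I)‖ ≤
        C * Real.exp (-a * |y| ^ (1 / β) + b * |x| ^ (1 / (1 - α)))

section Aux

open Real Filter Set intervalIntegral Topology FourierTransform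

namespace GSAux

/-- Integrability of `exp (-a * |t| ^ p)` on `ℝ`. -/
lemma integrable_exp_neg_abs_rpow {a p : ℝ} (ha : 0 < a) (hp : 1 ≤ p) :
    Integrable (fun t : ℝ => Real.exp (-a * |t| ^ p)) := by
  have h1 : IntegrableOn (fun t : ℝ => Real.exp (-a * |t| ^ p)) (Ioi 0) := by
    have h := integrableOn_rpow_mul_exp_neg_mul_rpow (by norm_num : (-1:ℝ) < (0:ℝ)) (by linarith) ha
    refine h.congr_fun (fun x hx => ?_) measurableSet_Ioi
    beta_reduce
    rw [Real.rpow_zero, one_mul, abs_of_pos hx]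
  have hmeas : AEStronglyMeasurable (fun t : ℝ => Real.exp (-a * |t| ^ p)) volume := by
    apply Measurable.aestronglyMeasurable
    exact ((measurable_id'.abs.pow measurable_const).const_mul (-a)).exp
  rw [← integrableOn_univ, ← @Iio_union_Ici _ _ (0 : ℝ), integrableOn_union,
    integrableOn_Ici_iff_integrableOn_Ioi]
  refine ⟨?_, h1⟩
  rw [← (Measure.measurePreserving_neg (volume : Measure ℝ)).integrableOn_comp_preimage
      (Homeomorph.neg ℝ).measurableEmbedding]
  simp only [Function.comp_def, abs_neg, neg_preimage, neg_Iio, neg_neg, neg_zero]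
  exact h1

/-- A linear function is eventually dominated by a strictly convex power:
`c * t ≤ A * t ^ p + K` for all `t ≥ 0`. -/
lemma linear_le_rpow_add {c A p : ℝ} (hc : 0 ≤ c) (hA : 0 < A) (hp : 1 < p) :
    ∃ K : ℝ, 0 ≤ K ∧ ∀ t : ℝ, 0 ≤ t → c * t ≤ A * t ^ p + K := by
  set R : ℝ := max 1 ((c / A) ^ (1 / (p - 1))) with hR
  have hR1 : (1:ℝ) ≤ R := le_max_left _ _
  have hR0 : 0 < R := lt_of_lt_of_le one_pos hR1
  refine ⟨c * R, mul_nonneg hc hR0.le, fun t ht => ?_⟩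
  rcases le_total t R with h | h
  · have : c * t ≤ c * R := mul_le_mul_of_nonneg_left h hc
    have h2 : 0 ≤ A * t ^ p := mul_nonneg hA.le (Real.rpow_nonneg ht p)
    linarith
  · -- t ≥ R : c ≤ A * t ^ (p - 1)
    have htpos : 0 < t := lt_of_lt_of_le hR0 h
    have hcle : c ≤ A * t ^ (p - 1) := by
      have h3 : (c / A) ^ (1 / (p - 1)) ≤ t := le_trans (le_max_right _ _) h
      have h4 : ((c / A) ^ (1 / (p - 1))) ^ (p - 1) ≤ t ^ (p - 1) := by
        apply Real.rpow_le_rpow (Real.rpow_nonneg (div_nonneg hc hA.le) _) h3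
        linarith
      rw [← Real.rpow_mul (div_nonneg hc hA.le), one_div, inv_mul_cancel₀ (by linarith : p - 1 ≠ 0),
        Real.rpow_one] at h4
      calc c = A * (c / A) := by field_simp
      _ ≤ A * t ^ (p - 1) := by
        apply mul_le_mul_of_nonneg_left _ hA.le
        exact le_trans (le_of_eq rfl) h4
    have : c * t ≤ A * t ^ (p - 1) * t := mul_le_mul_of_nonneg_right hcle ht
    have heq : A * t ^ (p - 1) * t = A * t ^ p := by
      rw [mul_assoc, Real.rpow_sub_one htpos.ne', div_mul_cancel₀ _ htpos.ne']
    have h5 : 0 ≤ c * R := mul_nonneg hc hR0.le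
    nlinarith [mul_nonneg hA.le (Real.rpow_nonneg ht p)]


/-- Scaled Young inequality: `x * t ≤ a * t ^ p + c₂ * x ^ (p/(p-1))`. -/
lemma young_scaled {a p : ℝ} (ha : 0 < a) (hp : 1 < p) :
    ∃ c₂ : ℝ, 0 < c₂ ∧ ∀ x t : ℝ, 0 ≤ x → 0 ≤ t →
      x * t ≤ a * t ^ p + c₂ * x ^ (p / (p - 1)) := by
  set q : ℝ := p / (p - 1) with hqdef
  have hp0 : (0:ℝ) < p := by linarith
  have hp1 : p - 1 ≠ 0 := sub_ne_zero_of_ne (by linarith)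
  have hq0 : 0 < q := div_pos hp0 (by linarith)
  have hconj : p.HolderConjugate q := (Real.holderConjugate_iff_eq_conjExponent hp).2 hqdef
  set lam : ℝ := (a * p) ^ (1 / p) with hlam
  have hlam0 : 0 < lam := Real.rpow_pos_of_pos (by positivity) _
  have hlamq0 : 0 < lam ^ q := Real.rpow_pos_of_pos hlam0 _
  have hlamp : lam ^ p = a * p := by
    rw [hlam, ← Real.rpow_mul (by positivity), one_div, inv_mul_cancel₀ hp0.ne', Real.rpow_one]
  refine ⟨(lam ^ q * q)⁻¹, by positivity, fun x t hx ht => ?_⟩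
  have key : x * t = (lam * t) * (x / lam) := by field_simp
  rw [key]
  calc (lam * t) * (x / lam) ≤ (lam * t) ^ p / p + (x / lam) ^ q / q :=
        Real.young_inequality_of_nonneg (by positivity) (by positivity) hconj
    _ = a * t ^ p + (lam ^ q * q)⁻¹ * x ^ q := by
        rw [Real.mul_rpow hlam0.le ht, Real.div_rpow hx hlam0.le, hlamp]
        field_simp

/-- Choice of the optimal shift: for every `y` there is `s` with
`y * s + b * |s| ^ q ≤ -a' * |y| ^ (q/(q-1))`. -/
lemma legendre_shift {b q : ℝ} (hb : 0 < b) (hq : 1 < q) :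
    ∃ a' : ℝ, 0 < a' ∧ ∀ y : ℝ, ∃ s : ℝ,
      y * s + b * |s| ^ q ≤ -a' * |y| ^ (q / (q - 1)) := by
  have hq1 : (0:ℝ) < q - 1 := by linarith
  set ε : ℝ := min 1 ((1 / (2 * b)) ^ (1 / (q - 1))) with hε
  have hε0 : 0 < ε := lt_min one_pos (Real.rpow_pos_of_pos (by positivity) _)
  have hεb : b * ε ^ (q - 1) ≤ 1 / 2 := by
    have h1 : ε ≤ (1 / (2 * b)) ^ (1 / (q - 1)) := min_le_right _ _
    have h2 : ε ^ (q - 1) ≤ ((1 / (2 * b)) ^ (1 / (q - 1))) ^ (q - 1) :=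
      Real.rpow_le_rpow hε0.le h1 hq1.le
    rw [← Real.rpow_mul (by positivity), one_div (q-1), inv_mul_cancel₀ hq1.ne',
      Real.rpow_one] at h2
    calc b * ε ^ (q - 1) ≤ b * (1 / (2 * b)) :=
          mul_le_mul_of_nonneg_left h2 hb.le
      _ = 1 / 2 := by field_simp
  refine ⟨ε / 2, by positivity, fun y => ?_⟩
  set S : ℝ := ε * |y| ^ (1 / (q - 1)) with hS
  have hS0 : 0 ≤ S := by positivity
  refine ⟨if 0 ≤ y then -S else S, ?_⟩
  have habs : |if 0 ≤ y then -S else S| = S := by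
    split_ifs <;> simp [_root_.abs_of_nonneg hS0]
  have hys : y * (if 0 ≤ y then -S else S) = -(|y| * S) := by
    split_ifs with h
    · rw [_root_.abs_of_nonneg h]; ring
    · rw [_root_.abs_of_neg (not_le.mp h)]; ring
  rw [habs, hys]
  rcases eq_or_ne y 0 with rfl | hy
  · have hS' : S = 0 := by
      rw [hS, abs_zero, Real.zero_rpow (by positivity : (1:ℝ)/(q-1) ≠ 0), mul_zero]
    rw [hS', abs_zero, Real.zero_rpow (by positivity : q/(q-1) ≠ 0),
      Real.zero_rpow (by linarith : q ≠ 0)]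
    simp
  · have hy0 : 0 < |y| := abs_pos.mpr hy
    have hSq : S ^ q = ε ^ q * |y| ^ (q / (q - 1)) := by
      rw [hS, Real.mul_rpow hε0.le (Real.rpow_nonneg (abs_nonneg y) _),
        ← Real.rpow_mul (abs_nonneg y)]
      congr 2
      field_simp
    have hyS : |y| * S = ε * |y| ^ (q / (q - 1)) := by
      rw [hS, ← mul_assoc, mul_comm |y| ε, mul_assoc,
        ← Real.rpow_one_add' (abs_nonneg y) (by positivity)]
      congr 2
      field_simp; ring
    have hεq : ε ^ q = ε ^ (q - 1) * ε := by
      rw [Real.rpow_sub_one hε0.ne', div_mul_cancel₀ _ hε0.ne']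
    have hY : 0 ≤ |y| ^ (q / (q - 1)) := Real.rpow_nonneg (abs_nonneg y) _
    rw [hSq, hyS]
    have h2 : b * (ε ^ q * |y| ^ (q / (q - 1))) ≤ (ε / 2) * |y| ^ (q / (q - 1)) := by
      rw [hεq]
      calc b * (ε ^ (q - 1) * ε * |y| ^ (q / (q - 1)))
          = (b * ε ^ (q - 1)) * (ε * |y| ^ (q / (q - 1))) := by ring
        _ ≤ (1/2) * (ε * |y| ^ (q / (q - 1))) :=
            mul_le_mul_of_nonneg_right hεb (by positivity)
        _ = (ε / 2) * |y| ^ (q / (q - 1)) := by ring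
    nlinarith


/-- Integrability along a horizontal line from a uniform decay bound. -/
lemma integrable_line {H : ℂ → ℂ} (hc : Continuous H) (σ : ℝ) {D a p : ℝ}
    (ha : 0 < a) (hp : 1 ≤ p)
    (hbd : ∀ t : ℝ, ‖H ((t : ℂ) + (σ : ℂ) * Complex.I)‖ ≤ D * Real.exp (-a * |t| ^ p)) :
    Integrable (fun t : ℝ => H ((t : ℂ) + (σ : ℂ) * Complex.I)) := by
  refine Integrable.mono' ((integrable_exp_neg_abs_rpow ha hp).const_mul D) ?_ (ae_of_all _ hbd)
  exact (hc.comp (by continuity)).aestronglyMeasurable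

/-- Contour shift: the integral of an entire function with uniform strip decay
along a horizontal line does not depend on the line. -/
lemma integral_line_shift {H : ℂ → ℂ} (hH : Differentiable ℂ H) (s : ℝ) {D a p : ℝ}
    (ha : 0 < a) (hp : 1 < p)
    (hbd : ∀ t σ : ℝ, |σ| ≤ |s| →
      ‖H ((t : ℂ) + (σ : ℂ) * Complex.I)‖ ≤ D * Real.exp (-a * |t| ^ p)) :
    ∫ t : ℝ, H (t : ℂ) = ∫ t : ℝ, H ((t : ℂ) + (s : ℂ) * Complex.I) := by
  have hD : 0 ≤ D := by
    have := (norm_nonneg (H ((0:ℝ) + (0:ℝ) * Complex.I))).trans (hbd 0 0 (by simp))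
    have he : (0:ℝ) < Real.exp (-a * |(0:ℝ)| ^ p) := Real.exp_pos _
    nlinarith
  have hint : ∀ σ : ℝ, |σ| ≤ |s| → Integrable (fun t : ℝ => H ((t:ℂ) + (σ:ℂ) * Complex.I)) :=
    fun σ hσ => integrable_line hH.continuous σ ha hp.le (fun t => hbd t σ hσ)
  have hint0 : Integrable (fun t : ℝ => H (t:ℂ)) := by
    have := hint 0 (by simp)
    simpa using this
  have hints : Integrable (fun t : ℝ => H ((t:ℂ) + (s:ℂ) * Complex.I)) := hint s le_rfl
  -- the rectangle identity
  set I₁ : ℝ → ℂ := fun T => ∫ t : ℝ in -T..T, H ((t:ℂ) + (s:ℂ) * Complex.I) with hI₁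
  set I₂ : ℝ → ℂ := fun T => ∫ t : ℝ in -T..T, H (t:ℂ) with hI₂
  set V : ℝ → ℂ := fun T => ∫ σ : ℝ in (0:ℝ)..s, H ((T:ℝ) + (σ:ℂ) * Complex.I) with hV
  set V' : ℝ → ℂ := fun T => ∫ σ : ℝ in (0:ℝ)..s, H (-(T:ℂ) + (σ:ℂ) * Complex.I) with hV'
  have key : ∀ T : ℝ, I₂ T - I₁ T + Complex.I * V T - Complex.I * V' T = 0 := by
    intro T
    have h := integral_boundary_rect_eq_zero_of_differentiableOn H (↑(-T))
      ((T : ℂ) + (s : ℂ) * Complex.I) hH.differentiableOn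
    simpa only [neg_im, ofReal_im, neg_zero, ofReal_zero, zero_mul, add_zero, neg_re,
      ofReal_re, add_re, mul_re, I_re, mul_zero, I_im, tsub_zero, add_im, mul_im,
      mul_one, zero_add, smul_eq_mul, ofReal_neg] using h
  -- vertical integrals tend to zero
  have vert_bound : ∀ (T : ℝ) (W : ℝ), (∀ σ ∈ Set.uIoc (0:ℝ) s,
      ‖H ((W:ℂ) + (σ:ℂ) * Complex.I)‖ ≤ D * Real.exp (-a * |W| ^ p)) →
      ‖∫ σ : ℝ in (0:ℝ)..s, H ((W:ℂ) + (σ:ℂ) * Complex.I)‖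
        ≤ D * Real.exp (-a * |W| ^ p) * |s| := by
    intro T W hb
    have := intervalIntegral.norm_integral_le_of_norm_le_const hb
    simpa using this
  have habs_mem : ∀ σ ∈ Set.uIoc (0:ℝ) s, |σ| ≤ |s| := by
    intro σ hσ
    rcases le_or_gt 0 s with h | h
    · rw [uIoc_of_le h] at hσ
      rw [_root_.abs_of_pos hσ.1, _root_.abs_of_nonneg h]; exact hσ.2
    · rw [uIoc_of_ge h.le] at hσ
      rw [_root_.abs_of_nonpos hσ.2, _root_.abs_of_neg h]
      exact neg_le_neg hσ.1.le
  have hVb : ∀ T : ℝ, ‖V T‖ ≤ D * Real.exp (-a * |T| ^ p) * |s| := fun T =>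
    vert_bound T T (fun σ hσ => hbd T σ (habs_mem σ hσ))
  have hV'b : ∀ T : ℝ, ‖V' T‖ ≤ D * Real.exp (-a * |(-T)| ^ p) * |s| := fun T => by
    have := vert_bound T (-T) (fun σ hσ => by
      simpa using hbd (-T) σ (habs_mem σ hσ))
    simpa using this
  have hexp0 : Tendsto (fun T : ℝ => D * Real.exp (-a * |T| ^ p) * |s|) atTop (𝓝 0) := by
    have h1 : Tendsto (fun T : ℝ => -a * |T| ^ p) atTop atBot := by
      have h2 : Tendsto (fun T : ℝ => T ^ p) atTop atTop :=
        tendsto_rpow_atTop (by linarith)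
      have h3 : Tendsto (fun T : ℝ => -a * T ^ p) atTop atBot :=
        (tendsto_const_mul_atBot_of_neg (by linarith : -a < 0)).mpr h2
      refine h3.congr' ?_
      filter_upwards [eventually_ge_atTop (0:ℝ)] with T hT
      rw [_root_.abs_of_nonneg hT]
    have := (Real.tendsto_exp_atBot.comp h1).const_mul D
    simpa using this.mul_const |s|
  have hVz : Tendsto V atTop (𝓝 0) := by
    rw [tendsto_zero_iff_norm_tendsto_zero]
    exact tendsto_of_tendsto_of_tendsto_of_le_of_le' tendsto_const_nhds hexp0
      (Eventually.of_forall fun T => norm_nonneg _) (Eventually.of_forall hVb)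
  have hV'z : Tendsto V' atTop (𝓝 0) := by
    rw [tendsto_zero_iff_norm_tendsto_zero]
    refine tendsto_of_tendsto_of_tendsto_of_le_of_le' tendsto_const_nhds ?_
      (Eventually.of_forall fun T => norm_nonneg _) (Eventually.of_forall hV'b)
    simpa using hexp0
  have hI₂lim : Tendsto I₂ atTop (𝓝 (∫ t : ℝ, H (t:ℂ))) :=
    intervalIntegral_tendsto_integral hint0 tendsto_neg_atTop_atBot tendsto_id
  have hI₁lim : Tendsto I₁ atTop (𝓝 (∫ t : ℝ, H ((t:ℂ) + (s:ℂ) * Complex.I))) :=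
    intervalIntegral_tendsto_integral hints tendsto_neg_atTop_atBot tendsto_id
  have hI₁eq : ∀ T, I₁ T = I₂ T + (Complex.I * V T - Complex.I * V' T) := by
    intro T
    linear_combination -(key T)
  have hI₁lim' : Tendsto I₁ atTop
      (𝓝 ((∫ t : ℝ, H (t:ℂ)) + (Complex.I * 0 - Complex.I * 0))) := by
    refine Tendsto.congr (fun T => (hI₁eq T).symm) ?_
    exact hI₂lim.add (((hVz.const_mul _)).sub ((hV'z.const_mul _)))
  have := tendsto_nhds_unique hI₁lim (by simpa using hI₁lim')
  exact this.symm


/-- The core mapping lemma: the Laplace transform maps `S_α^β` into `J*S_β^α`. -/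
lemma core {α β : ℝ} (hα0 : 0 < α) (hα1 : α < 1) (hβ0 : 0 < β) (hβ1 : β < 1)
    {g : ℂ → ℂ} (hg : GelfandShilov1 α β g) : JstarS β α (LaplaceT g) := by
  obtain ⟨hgd, C, hC, a, ha, b, hb, hbound⟩ := hg
  set p : ℝ := 1 / α with hpdef
  set q : ℝ := 1 / (1 - β) with hqdef
  have hαne : α ≠ 0 := ne_of_gt hα0
  have hβ1' : (0:ℝ) < 1 - β := by linarith
  have hp : 1 < p := by rw [hpdef, lt_div_iff₀ hα0]; linarith
  have hq : 1 < q := by rw [hqdef, lt_div_iff₀ hβ1']; linarith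
  have hpc : p / (p - 1) = 1 / (1 - α) := by
    have h1 : (1:ℝ) - α ≠ 0 := by linarith
    rw [hpdef]; field_simp
  have hqc : q / (q - 1) = 1 / β := by
    have h1 : (1:ℝ) - β ≠ 0 := by linarith
    rw [hqdef]; field_simp; rw [sub_sub_cancel, div_self hβ0.ne']
  have hb' : ∀ t σ : ℝ, ‖g ((t:ℂ) + (σ:ℂ) * Complex.I)‖ ≤
      C * Real.exp (-a * |t| ^ p + b * |σ| ^ q) := fun t σ => by
    exact hbound t σ
  obtain ⟨c₂, hc₂, hyoung⟩ := young_scaled (a := a / 2) (by positivity) hp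
  obtain ⟨a', ha', hleg⟩ := legendre_shift hb hq
  set K₀ : ℝ := ∫ t : ℝ, Real.exp (-(a/2) * |t| ^ p) with hK₀
  have hK₀int : Integrable (fun t : ℝ => Real.exp (-(a/2) * |t| ^ p)) :=
    integrable_exp_neg_abs_rpow (by positivity) hp.le
  have hK₀pos : 0 < K₀ := by
    rw [hK₀]
    rw [integral_pos_iff_support_of_nonneg (fun t => (Real.exp_pos _).le) hK₀int]
    have : Function.support (fun t : ℝ => Real.exp (-(a/2) * |t| ^ p)) = Set.univ := by
      ext t; simp [Function.mem_support, (Real.exp_pos _).ne']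
    rw [this]
    simp
  have hexp : ∀ (z : ℂ) (t σ : ℝ), ‖Complex.exp (-z * ((t:ℂ) + (σ:ℂ) * Complex.I))‖ =
      Real.exp (-z.re * t + z.im * σ) := by
    intro z t σ
    rw [Complex.norm_exp]
    congr 1
    simp [Complex.mul_re]
    ring
  have hexp0 : ∀ (z : ℂ) (t : ℝ), ‖Complex.exp (-z * (t:ℂ))‖ = Real.exp (-z.re * t) := by
    intro z t
    have h := hexp z t 0
    simp only [Complex.ofReal_zero, zero_mul, add_zero, mul_zero] at h
    exact h
  -- pointwise bound for the integrand on the shifted line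
  have pointbound : ∀ (z : ℂ) (σ t : ℝ),
      ‖Complex.exp (-z * ((t:ℂ) + (σ:ℂ) * Complex.I)) * g ((t:ℂ) + (σ:ℂ) * Complex.I)‖ ≤
        (C * Real.exp (z.im * σ + b * |σ| ^ q + c₂ * |z.re| ^ (p / (p - 1)))) *
          Real.exp (-(a/2) * |t| ^ p) := by
    intro z σ t
    rw [norm_mul, hexp]
    calc Real.exp (-z.re * t + z.im * σ) * ‖g ((t:ℂ) + (σ:ℂ) * Complex.I)‖
        ≤ Real.exp (-z.re * t + z.im * σ) * (C * Real.exp (-a * |t| ^ p + b * |σ| ^ q)) :=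
          mul_le_mul_of_nonneg_left (hb' t σ) (Real.exp_pos _).le
      _ = C * Real.exp ((-z.re * t + z.im * σ) + (-a * |t| ^ p + b * |σ| ^ q)) := by
          simp only [Real.exp_add]; ring
      _ ≤ C * Real.exp ((z.im * σ + b * |σ| ^ q + c₂ * |z.re| ^ (p / (p - 1))) +
            (-(a/2) * |t| ^ p)) := by
          apply mul_le_mul_of_nonneg_left _ hC.le
          rw [Real.exp_le_exp]
          have h1 : -z.re * t ≤ |z.re| * |t| := by
            calc -z.re * t ≤ |(-z.re) * t| := le_abs_self _
              _ = |z.re| * |t| := by rw [abs_mul, abs_neg]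
          have h2 : |z.re| * |t| ≤ (a/2) * |t| ^ p + c₂ * |z.re| ^ (p / (p - 1)) :=
            hyoung |z.re| |t| (abs_nonneg _) (abs_nonneg _)
          linarith
      _ = (C * Real.exp (z.im * σ + b * |σ| ^ q + c₂ * |z.re| ^ (p / (p - 1)))) *
            Real.exp (-(a/2) * |t| ^ p) := by rw [mul_assoc, ← Real.exp_add]
  -- uniform strip bound, for the contour shift
  have stripbound : ∀ (z : ℂ) (s t σ : ℝ), |σ| ≤ |s| →
      ‖Complex.exp (-z * ((t:ℂ) + (σ:ℂ) * Complex.I)) * g ((t:ℂ) + (σ:ℂ) * Complex.I)‖ ≤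
        (C * Real.exp (|z.im| * |s| + b * |s| ^ q + c₂ * |z.re| ^ (p / (p - 1)))) *
          Real.exp (-(a/2) * |t| ^ p) := by
    intro z s t σ hσ
    refine (pointbound z σ t).trans ?_
    apply mul_le_mul_of_nonneg_right _ (Real.exp_pos _).le
    apply mul_le_mul_of_nonneg_left _ hC.le
    rw [Real.exp_le_exp]
    have h1 : z.im * σ ≤ |z.im| * |s| := by
      calc z.im * σ ≤ |z.im * σ| := le_abs_self _
        _ = |z.im| * |σ| := abs_mul _ _
        _ ≤ |z.im| * |s| := mul_le_mul_of_nonneg_left hσ (abs_nonneg _)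
    have h2 : |σ| ^ q ≤ |s| ^ q := Real.rpow_le_rpow (abs_nonneg _) hσ (by linarith)
    nlinarith
  -- contour shift
  have shift : ∀ (z : ℂ) (s : ℝ), LaplaceT g z =
      ∫ t : ℝ, Complex.exp (-z * ((t:ℂ) + (s:ℂ) * Complex.I)) * g ((t:ℂ) + (s:ℂ) * Complex.I) := by
    intro z s
    have hHd : Differentiable ℂ (fun w : ℂ => Complex.exp (-z * w) * g w) :=
      ((differentiable_id.const_mul (-z)).cexp).mul hgd
    exact integral_line_shift hHd s (by positivity : (0:ℝ) < a/2) hp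
      (fun t σ hσ => stripbound z s t σ hσ)
  -- the final bound
  have boundfinal : ∀ z : ℂ, ‖LaplaceT g z‖ ≤
      (C * K₀) * Real.exp (-a' * |z.im| ^ (1/β) + c₂ * |z.re| ^ (1/(1-α))) := by
    intro z
    obtain ⟨s, hs⟩ := hleg z.im
    rw [shift z s]
    set Dz : ℝ := C * Real.exp (z.im * s + b * |s| ^ q + c₂ * |z.re| ^ (p / (p - 1))) with hDz
    have hnorm : ‖∫ t : ℝ, Complex.exp (-z * ((t:ℂ) + (s:ℂ) * Complex.I)) *
        g ((t:ℂ) + (s:ℂ) * Complex.I)‖ ≤ ∫ t : ℝ, Dz * Real.exp (-(a/2) * |t| ^ p) := by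
      apply MeasureTheory.norm_integral_le_of_norm_le (hK₀int.const_mul Dz)
      exact ae_of_all _ (fun t => pointbound z s t)
    rw [MeasureTheory.integral_const_mul] at hnorm
    refine hnorm.trans ?_
    rw [← hK₀]
    calc Dz * K₀ = (C * K₀) * Real.exp (z.im * s + b * |s| ^ q + c₂ * |z.re| ^ (p / (p - 1))) := by
          rw [hDz]; ring
      _ ≤ (C * K₀) * Real.exp (-a' * |z.im| ^ (1/β) + c₂ * |z.re| ^ (1/(1-α))) := by
          apply mul_le_mul_of_nonneg_left _ (by positivity)
          rw [Real.exp_le_exp, ← hqc, ← hpc]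
          linarith
  have hcont : ∀ z : ℂ, Continuous (fun t : ℝ => Complex.exp (-z * (t:ℂ)) * g (t:ℂ)) := by
    intro z
    exact (Complex.continuous_exp.comp (continuous_const.mul continuous_ofReal)).mul
      (hgd.continuous.comp continuous_ofReal)
  -- differentiability
  have hdiff : Differentiable ℂ (LaplaceT g) := by
    intro z₀
    obtain ⟨K, hK0, hKb⟩ := linear_le_rpow_add (c := |z₀.re| + 2)
      (by positivity) (by positivity : (0:ℝ) < a/2) hp
    have hbnd : ∀ t : ℝ, ‖g (t:ℂ)‖ ≤ C * Real.exp (-a * |t| ^ p) := by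
      intro t
      have := hb' t 0
      simpa [Real.zero_rpow (by positivity : q ≠ 0)] using this
    set bound : ℝ → ℝ := fun t => C * Real.exp K * Real.exp (-(a/2) * |t| ^ p) with hbdef
    have key := _root_.hasDerivAt_integral_of_dominated_loc_of_deriv_le (F := fun (z : ℂ) (t : ℝ) =>
        Complex.exp (-z * (t:ℂ)) * g (t:ℂ))
      (F' := fun (z : ℂ) (t : ℝ) => (-(t:ℂ)) * (Complex.exp (-z * (t:ℂ)) * g (t:ℂ)))
      (x₀ := z₀) (bound := bound) (s := Metric.ball z₀ 1) (μ := volume) (Metric.ball_mem_nhds z₀ one_pos) ?_ ?_ ?_ ?_ ?_ ?_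
    · exact HasDerivAt.differentiableAt key.2
    · exact Eventually.of_forall (fun z => (hcont z).aestronglyMeasurable)
    · -- integrability at z₀
      refine Integrable.mono'
        (hK₀int.const_mul (C * Real.exp (c₂ * |z₀.re| ^ (p / (p - 1)))))
        (hcont z₀).aestronglyMeasurable (ae_of_all _ fun t => ?_)
      have hpb := pointbound z₀ 0 t
      simpa [Real.zero_rpow (by positivity : q ≠ 0), mul_assoc] using hpb
    · exact Continuous.aestronglyMeasurable (continuous_ofReal.neg.mul (hcont z₀))
    · -- bound for F' on the ball
      apply ae_of_all
      intro t z hz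
      have hzre : |z.re| ≤ |z₀.re| + 1 := by
        have h1 : ‖z - z₀‖ < 1 := by simpa [dist_eq_norm] using (Metric.mem_ball.mp hz)
        have h2 : |(z - z₀).re| ≤ ‖z - z₀‖ := by
          exact Complex.abs_re_le_norm _
        have h3 : |z.re| - |z₀.re| ≤ |z.re - z₀.re| := abs_sub_abs_le_abs_sub _ _
        rw [Complex.sub_re] at h2
        linarith
      have hnormeq : ‖(-(t:ℂ)) * (Complex.exp (-z * (t:ℂ)) * g (t:ℂ))‖ =
          |t| * (Real.exp (-z.re * t) * ‖g (t:ℂ)‖) := by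
        rw [norm_mul, norm_mul, hexp0, norm_neg, Complex.norm_real, Real.norm_eq_abs]
      rw [hnormeq, hbdef]
      have e1 : |t| ≤ Real.exp |t| := by
        have := Real.add_one_le_exp |t|
        linarith
      have e2 : Real.exp (-z.re * t) ≤ Real.exp ((|z₀.re| + 1) * |t|) := by
        rw [Real.exp_le_exp]
        calc -z.re * t ≤ |(-z.re) * t| := le_abs_self _
          _ = |z.re| * |t| := by rw [abs_mul, abs_neg]
          _ ≤ (|z₀.re| + 1) * |t| := mul_le_mul_of_nonneg_right hzre (abs_nonneg _)
      calc |t| * (Real.exp (-z.re * t) * ‖g (t:ℂ)‖)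
          ≤ Real.exp |t| * (Real.exp ((|z₀.re| + 1) * |t|) * (C * Real.exp (-a * |t| ^ p))) := by
            apply mul_le_mul e1 _ (by positivity) (by positivity)
            exact mul_le_mul e2 (hbnd t) (norm_nonneg _) (by positivity)
        _ = C * Real.exp (|t| + (|z₀.re| + 1) * |t| + -a * |t| ^ p) := by
            simp only [Real.exp_add]; ring
        _ ≤ C * Real.exp (K + -(a/2) * |t| ^ p) := by
            apply mul_le_mul_of_nonneg_left _ hC.le
            rw [Real.exp_le_exp]
            have := hKb |t| (abs_nonneg t)
            have heq : |t| + (|z₀.re| + 1) * |t| = (|z₀.re| + 2) * |t| := by ring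
            linarith [heq ▸ this]
        _ = C * Real.exp K * Real.exp (-(a/2) * |t| ^ p) := by
            simp only [Real.exp_add]; ring
    · exact (hK₀int.const_mul _)
    · -- HasDerivAt
      apply ae_of_all
      intro t z hz
      have h1 : HasDerivAt (fun z : ℂ => -z * (t:ℂ)) (-(t:ℂ)) z := by
        simpa using (hasDerivAt_id z).neg.mul_const (t:ℂ)
      have h2 := (h1.cexp).mul_const (g (t:ℂ))
      exact h2.congr_deriv (by beta_reduce; ring)
  refine ⟨hdiff, C * K₀ + 1, by positivity, a', ha', c₂, hc₂, fun x y => ?_⟩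
  have hbf := boundfinal ((x:ℂ) + (y:ℂ) * Complex.I)
  simp only [Complex.add_re, Complex.ofReal_re, Complex.mul_re, Complex.I_re, Complex.I_im,
    Complex.ofReal_im, Complex.add_im, Complex.mul_im] at hbf
  norm_num at hbf
  refine hbf.trans ?_
  have hEq : (-(a' * |y| ^ β⁻¹) + c₂ * |x| ^ (1 - α)⁻¹) =
      (-a' * |y| ^ (1/β) + c₂ * |x| ^ (1/(1-α))) := by
    rw [one_div, one_div]; ring
  rw [hEq]
  apply mul_le_mul_of_nonneg_right _ (Real.exp_pos _).le
  linarith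


/-- A Gelfand–Shilov function is integrable on the real axis. -/
lemma gs_integrable {α β : ℝ} (hα0 : 0 < α) (hα1 : α < 1) (hβ1 : β < 1)
    {φ : ℂ → ℂ} (hφ : GelfandShilov1 α β φ) : Integrable (fun t : ℝ => φ (t:ℂ)) := by
  obtain ⟨hd, C, hC, a, ha, b, hb, hbd⟩ := hφ
  have hp : 1 ≤ 1/α := by rw [le_div_iff₀ hα0]; linarith
  refine Integrable.mono'
    ((integrable_exp_neg_abs_rpow ha hp).const_mul C)
    ((hd.continuous.comp continuous_ofReal).aestronglyMeasurable) (ae_of_all _ fun t => ?_)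
  have h := hbd t 0
  have hne : 1/(1-β) ≠ 0 := by
    have : (0:ℝ) < 1 - β := by linarith
    positivity
  rw [abs_zero, Real.zero_rpow hne, mul_zero, add_zero] at h
  simp only [Complex.ofReal_zero, zero_mul, add_zero] at h
  exact h

/-- Laplace transform on the imaginary axis is the Fourier transform. -/
lemma laplace_eq_fourier (φ : ℂ → ℂ) (ξ : ℝ) :
    LaplaceT φ ((2 * π * ξ : ℝ) * Complex.I) = 𝓕 (fun t : ℝ => φ (t:ℂ)) ξ := by
  rw [Real.fourier_real_eq_integral_exp_smul, LaplaceT]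
  congr 1
  funext t
  rw [smul_eq_mul]
  congr 1
  push_cast
  ring

/-- Identity theorem: two entire functions agreeing on a nonzero null sequence agree. -/
lemma entire_eq_of_eq_on_seq {F G : ℂ → ℂ} (hF : Differentiable ℂ F) (hG : Differentiable ℂ G)
    (u : ℕ → ℂ) (hu0 : Tendsto u atTop (𝓝 0)) (hune : ∀ n, u n ≠ 0)
    (heq : ∀ n, F (u n) = G (u n)) : F = G := by
  apply AnalyticOnNhd.eq_of_frequently_eq (𝕜 := ℂ)
    (analyticOnNhd_univ_iff_differentiable.mpr hF)
    (analyticOnNhd_univ_iff_differentiable.mpr hG) (z₀ := 0)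
  have hu : Tendsto u atTop (𝓝[≠] (0:ℂ)) :=
    tendsto_nhdsWithin_iff.mpr ⟨hu0, Eventually.of_forall fun n => hune n⟩
  exact hu.frequently (Frequently.of_forall heq)


/-- The standard nonzero null sequence in `ℂ` along the positive reals. -/
lemma seq_real : Tendsto (fun n : ℕ => (((1:ℝ)/(n+1) : ℝ) : ℂ)) atTop (𝓝 0) := by
  have h := tendsto_one_div_add_atTop_nhds_zero_nat (𝕜 := ℝ)
  have h2 : Tendsto (fun n : ℕ => (((1:ℝ)/(n+1) : ℝ) : ℂ)) atTop (𝓝 (((0:ℝ):ℂ))) :=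
    (Complex.continuous_ofReal.tendsto 0).comp h
  rwa [Complex.ofReal_zero] at h2

lemma laplace_injective {α β : ℝ} (hα0 : 0 < α) (hα1 : α < 1) (hβ0 : 0 < β) (hβ1 : β < 1)
    {φ₁ φ₂ : ℂ → ℂ} (h1 : GelfandShilov1 α β φ₁) (h2 : GelfandShilov1 α β φ₂)
    (heq : LaplaceT φ₁ = LaplaceT φ₂) : φ₁ = φ₂ := by
  have hi1 := gs_integrable hα0 hα1 hβ1 h1
  have hi2 := gs_integrable hα0 hα1 hβ1 h2
  have hc1 : Continuous fun t : ℝ => φ₁ (t:ℂ) := h1.1.continuous.comp continuous_ofReal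
  have hc2 : Continuous fun t : ℝ => φ₂ (t:ℂ) := h2.1.continuous.comp continuous_ofReal
  set u : ℝ → ℂ := fun t => φ₁ (t:ℂ) - φ₂ (t:ℂ) with hu
  have hu_int : Integrable u := hi1.sub hi2
  have hu_cont : Continuous u := hc1.sub hc2
  have hFu : 𝓕 u = 0 := by
    funext ξ
    have e1 : 𝓕 u ξ = 𝓕 (fun t : ℝ => φ₁ (t:ℂ)) ξ - 𝓕 (fun t : ℝ => φ₂ (t:ℂ)) ξ := by
      simp only [Real.fourier_eq, hu, smul_sub]
      exact integral_sub ((Real.fourierIntegral_convergent_iff ξ).2 hi1)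
        ((Real.fourierIntegral_convergent_iff ξ).2 hi2)
    rw [e1, ← laplace_eq_fourier, ← laplace_eq_fourier, heq, sub_self, Pi.zero_apply]
  have hinv := hu_cont.fourierInv_fourier_eq hu_int (by rw [hFu]; exact integrable_zero _ _ _)
  have hu0 : ∀ t : ℝ, u t = 0 := by
    intro t
    rw [← hinv, hFu]
    simp [Real.fourierInv_eq]
  have heqr : ∀ t : ℝ, φ₁ (t:ℂ) = φ₂ (t:ℂ) := fun t => sub_eq_zero.mp (hu0 t)
  apply entire_eq_of_eq_on_seq h1.1 h2.1 (fun n : ℕ => (((1:ℝ)/(n+1) : ℝ) : ℂ)) seq_real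
  · intro n
    rw [Complex.ofReal_ne_zero]
    positivity
  · intro n
    exact heqr _


lemma laplace_surjective {α β : ℝ} (hα0 : 0 < α) (hα1 : α < 1) (hβ0 : 0 < β) (hβ1 : β < 1)
    {f : ℂ → ℂ} (hf : JstarS β α f) :
    ∃ φ : ℂ → ℂ, GelfandShilov1 α β φ ∧ LaplaceT φ = f := by
  obtain ⟨hfd, C, hC, a, ha, b, hb, hfb⟩ := hf
  -- the rotated function
  set g : ℂ → ℂ := fun w => f (Complex.I * w) with hgdef
  have hgd : Differentiable ℂ g := hfd.comp (differentiable_id.const_mul Complex.I)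
  have hgGS : GelfandShilov1 β α g := by
    refine ⟨hgd, C, hC, a, ha, b, hb, fun x y => ?_⟩
    have harg : Complex.I * ((x:ℂ) + (y:ℂ) * Complex.I) = ((-y:ℝ):ℂ) + (x:ℂ) * Complex.I := by
      push_cast; ring_nf; rw [Complex.I_sq]; ring
    show ‖f (Complex.I * ((x:ℂ) + (y:ℂ) * Complex.I))‖ ≤ _
    rw [harg]
    have := hfb (-y) x
    rwa [abs_neg] at this
  -- its Laplace transform
  have hLg : JstarS α β (LaplaceT g) := core hβ0 hβ1 hα0 hα1 hgGS
  obtain ⟨hLgd, C', hC', a', ha', b', hb', hLgb⟩ := hLg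
  set r : ℝ := (2 * π)⁻¹ with hrdef
  have hr : 0 < r := by rw [hrdef]; positivity
  set φ : ℂ → ℂ := fun w => (r : ℂ) * LaplaceT g (-Complex.I * w) with hφdef
  have hφd : Differentiable ℂ φ :=
    (hLgd.comp (differentiable_id.const_mul (-Complex.I))).const_mul _
  have hφGS : GelfandShilov1 α β φ := by
    refine ⟨hφd, r * C', by positivity, a', ha', b', hb', fun x y => ?_⟩
    have harg : -Complex.I * ((x:ℂ) + (y:ℂ) * Complex.I) = ((y:ℝ):ℂ) + ((-x:ℝ):ℂ) * Complex.I := by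
      push_cast; ring_nf; rw [Complex.I_sq]; ring
    show ‖(r:ℂ) * LaplaceT g (-Complex.I * ((x:ℂ) + (y:ℂ) * Complex.I))‖ ≤ _
    rw [norm_mul, harg, Complex.norm_real, Real.norm_eq_abs, _root_.abs_of_pos hr, mul_assoc]
    apply mul_le_mul_of_nonneg_left _ hr.le
    have := hLgb y (-x)
    rwa [abs_neg] at this
  -- the boundary function
  set g₀ : ℝ → ℂ := fun σ => g (((2 * π * σ : ℝ)):ℂ) with hg₀def
  have hg₀cont : Continuous g₀ := hgd.continuous.comp (by continuity)
  have hg₀int : Integrable g₀ := by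
    have hp : 1 ≤ 1 / β := by rw [le_div_iff₀ hβ0]; linarith
    have ha2 : 0 < a * (2*π) ^ (1/β) := by positivity
    refine Integrable.mono'
      ((integrable_exp_neg_abs_rpow ha2 hp).const_mul C)
      hg₀cont.aestronglyMeasurable (ae_of_all _ fun σ => ?_)
    have harg : Complex.I * (((2 * π * σ : ℝ)):ℂ) = ((0:ℝ):ℂ) + ((2*π*σ : ℝ):ℂ) * Complex.I := by
      push_cast; ring
    have h := hfb 0 (2*π*σ)
    rw [abs_zero, Real.zero_rpow (by
      have : (0:ℝ) < 1 - α := by linarith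
      positivity : 1/(1-α) ≠ 0), mul_zero, add_zero] at h
    have habs : |2*π*σ| ^ (1/β) = (2*π) ^ (1/β) * |σ| ^ (1/β) := by
      rw [abs_mul, _root_.abs_of_pos (by positivity : (0:ℝ) < 2*π),
        Real.mul_rpow (by positivity) (abs_nonneg σ)]
    show ‖g₀ σ‖ ≤ _
    rw [hg₀def]
    show ‖g (((2 * π * σ : ℝ)):ℂ)‖ ≤ _
    rw [hgdef]
    show ‖f (Complex.I * (((2 * π * σ : ℝ)):ℂ))‖ ≤ _
    rw [harg]
    refine h.trans ?_
    rw [habs]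
    apply mul_le_mul_of_nonneg_left _ hC.le
    rw [Real.exp_le_exp]
    ring_nf
    exact le_rfl
  -- φ on the real axis equals 𝓕 g₀ ∘ (-·)
  have hφr : ∀ t : ℝ, φ (t:ℂ) = 𝓕 g₀ (-t) := by
    intro t
    set F : ℝ → ℂ := fun s => Complex.exp (-(-Complex.I * (t:ℂ)) * (s:ℂ)) * g (s:ℂ) with hFdef
    have h1 : 𝓕 g₀ (-t) = ∫ σ : ℝ, F (2 * π * σ) := by
      rw [Real.fourier_real_eq_integral_exp_smul]
      congr 1
      funext σ
      rw [smul_eq_mul]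
      show _ * g₀ σ = _ * g (((2 * π * σ : ℝ)):ℂ)
      congr 1
      push_cast
      ring_nf
    have h2 : (∫ σ : ℝ, F (2 * π * σ)) = |((2*π)⁻¹ : ℝ)| • ∫ s : ℝ, F s :=
      MeasureTheory.Measure.integral_comp_mul_left F (2*π)
    rw [h1, h2, _root_.abs_of_pos (by positivity : (0:ℝ) < (2*π)⁻¹)]
    show _ = (((2*π)⁻¹ : ℝ)) • LaplaceT g (-Complex.I * (t:ℂ))
    rw [hφdef]
    show (r:ℂ) * LaplaceT g (-Complex.I * (t:ℂ)) = _
    rw [real_smul, hrdef]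
  have hφrinv : (fun t : ℝ => φ (t:ℂ)) = 𝓕⁻ g₀ := by
    funext t
    rw [hφr t, Real.fourierInv_eq_fourier_neg]
  -- 𝓕 g₀ is integrable (it equals φ ∘ neg on ℝ)
  have hφint : Integrable (fun t : ℝ => φ (t:ℂ)) := gs_integrable hα0 hα1 hβ1 hφGS
  have hFg₀int : Integrable (𝓕 g₀) := by
    have heqn : 𝓕 g₀ = fun ξ : ℝ => φ ((-ξ : ℝ):ℂ) := by
      funext ξ
      rw [hφr (-ξ), neg_neg]
    rw [heqn]
    have := ((Measure.measurePreserving_neg (volume : Measure ℝ)).integrable_comp_emb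
      (Homeomorph.neg ℝ).measurableEmbedding (g := fun t : ℝ => φ (t:ℂ))).mpr hφint
    simpa [Function.comp_def] using this
  -- Fourier inversion
  have hinv : 𝓕 (𝓕⁻ g₀) = g₀ := hg₀cont.fourier_fourierInv_eq hg₀int hFg₀int
  -- equality on the imaginary axis
  have hpt : ∀ ξ : ℝ, LaplaceT φ ((((2*π*ξ : ℝ)):ℂ) * Complex.I) =
      f ((((2*π*ξ : ℝ)):ℂ) * Complex.I) := by
    intro ξ
    rw [laplace_eq_fourier, hφrinv, hinv]
    show g (((2 * π * ξ : ℝ)):ℂ) = _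
    rw [hgdef]
    show f (Complex.I * (((2 * π * ξ : ℝ)):ℂ)) = _
    rw [mul_comm]
  -- conclude by the identity theorem
  refine ⟨φ, hφGS, ?_⟩
  have hLφd : Differentiable ℂ (LaplaceT φ) := (core hα0 hα1 hβ0 hβ1 hφGS).1
  apply entire_eq_of_eq_on_seq hLφd hfd
    (fun n : ℕ => ((2*π*((1:ℝ)/(n+1)) : ℝ):ℂ) * Complex.I)
  · have h := tendsto_one_div_add_atTop_nhds_zero_nat (𝕜 := ℝ)
    have h2 : Tendsto (fun n : ℕ => (2*π*((1:ℝ)/(n+1)) : ℝ)) atTop (𝓝 (2*π*0)) :=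
      (tendsto_const_nhds.mul h)
    rw [mul_zero] at h2
    have h3 : Tendsto (fun n : ℕ => ((2*π*((1:ℝ)/(n+1)) : ℝ):ℂ)) atTop (𝓝 (((0:ℝ):ℂ))) :=
      (Complex.continuous_ofReal.tendsto 0).comp h2
    rw [Complex.ofReal_zero] at h3
    have := h3.mul_const Complex.I
    rwa [zero_mul] at this
  · intro n
    apply mul_ne_zero _ Complex.I_ne_zero
    rw [Complex.ofReal_ne_zero]
    positivity
  · intro n
    exact hpt _

end GSAux

end Aux

theorem laplace_bijection_GelfandShilov_JstarS
    (α β : ℝ) (hα : 0 < α ∧ α < 1) (hβ : 0 < β ∧ β < 1) (hαβ : 1 ≤ α + β) :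
    (∀ φ : ℂ → ℂ, GelfandShilov1 α β φ → JstarS β α (LaplaceT φ)) ∧
    (∀ φ₁ φ₂ : ℂ → ℂ, GelfandShilov1 α β φ₁ → GelfandShilov1 α β φ₂ →
      LaplaceT φ₁ = LaplaceT φ₂ → φ₁ = φ₂) ∧
    (∀ f : ℂ → ℂ, JstarS β α f → ∃ φ : ℂ → ℂ, GelfandShilov1 α β φ ∧ LaplaceT φ = f) := by
  obtain ⟨hα0, hα1⟩ := hα
  obtain ⟨hβ0, hβ1⟩ := hβ
  exact ⟨fun φ hφ => GSAux.core hα0 hα1 hβ0 hβ1 hφ,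
    fun φ₁ φ₂ h1 h2 h => GSAux.laplace_injective hα0 hα1 hβ0 hβ1 h1 h2 h,
    fun f hf => GSAux.laplace_surjective hα0 hα1 hβ0 hβ1 hf⟩
end
end

section
/- Let α, β ∈ (0,1), let F : ℂ → ℂ be entire with constants C, a, b > 0 such that |F(x+iy)| ≤ C·exp(−a|y|^{1/β} + b|x|^{1/(1−α)}) for all x, y ∈ ℝ, and let ψ denote the inverse of the bijection z ↦ sinh(iz) from the strip {|Re z| < π/2} onto Ω := ℂ \ ({it : t ≥ 1} ∪ {−it : t ≥ 1}). Then for every compact set K ⊂ (0,∞) (so that K + iℝ ⊂ Ω), the integral ∫_K ∫_ℝ |F(ψ(ξ + iη))| dη dξ is finite; the same holds for every compact K ⊂ (−∞,0). -/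
open Complex MeasureTheory

noncomputable section

/-- The slit plane `Ω = ℂ \ ({it : t ≥ 1} ∪ {-it : t ≥ 1})`. -/
def slitPlane' : Set ℂ :=
  {w : ℂ | ¬ ∃ t : ℝ, 1 ≤ t ∧ (w = Complex.I * (t : ℂ) ∨ w = -(Complex.I * (t : ℂ)))}

lemma mem_slitPlane'_of_re_ne_zero {w : ℂ} (hw : w.re ≠ 0) : w ∈ slitPlane' := by
  rintro ⟨t, ht, h | h⟩
  · apply hw; rw [h]; simp
  · apply hw; rw [h]; simp

lemma compl_slitPlane' : slitPlane'ᶜ = {w : ℂ | w.re = 0 ∧ 1 ≤ |w.im|} := by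
  ext w
  simp only [slitPlane', Set.mem_compl_iff, Set.mem_setOf_eq, not_not]
  constructor
  · rintro ⟨t, ht, h | h⟩
    · subst h
      constructor
      · simp
      · simp only [mul_im, I_re, ofReal_im, mul_zero, I_im, ofReal_re, one_mul, zero_add]
        rw [_root_.abs_of_nonneg (le_trans zero_le_one ht)]; exact ht
    · subst h
      constructor
      · simp
      · simp only [neg_im, mul_im, I_re, ofReal_im, mul_zero, I_im, ofReal_re, one_mul, zero_add,
          abs_neg]
        rw [_root_.abs_of_nonneg (le_trans zero_le_one ht)]; exact ht
  · rintro ⟨h0, h1⟩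
    rcases le_or_gt 0 w.im with hpos | hneg
    · refine ⟨w.im, ?_, Or.inl ?_⟩
      · rwa [_root_.abs_of_nonneg hpos] at h1
      · apply Complex.ext <;> simp [h0]
    · refine ⟨-w.im, ?_, Or.inr ?_⟩
      · rwa [_root_.abs_of_neg hneg] at h1
      · apply Complex.ext <;> simp [h0]

lemma measurableSet_slitPlane' : MeasurableSet slitPlane' := by
  rw [← compl_compl slitPlane']
  refine MeasurableSet.compl ?_
  rw [compl_slitPlane']
  exact ((isClosed_eq Complex.continuous_re continuous_const).measurableSet).inter
    ((isClosed_le continuous_const (continuous_abs.comp Complex.continuous_im)).measurableSet)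

set_option maxHeartbeats 2000000 in
theorem integral_pullback_finite
    (α β : ℝ) (hα : 0 < α ∧ α < 1) (hβ : 0 < β ∧ β < 1)
    (F : ℂ → ℂ) (hF : Differentiable ℂ F)
    (C a b : ℝ) (hC : 0 < C) (ha : 0 < a) (hb : 0 < b)
    (hbound : ∀ x y : ℝ,
      ‖F ((x : ℂ) + (y : ℂ) * Complex.I)‖ ≤
        C * Real.exp (-a * |y| ^ (1 / β) + b * |x| ^ (1 / (1 - α))))
    (ψ : ℂ → ℂ)
    (hψinv : Set.InvOn ψ (fun z => Complex.sinh (Complex.I * z))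
      {z : ℂ | |z.re| < Real.pi / 2} slitPlane')
    (hψmaps : Set.MapsTo ψ slitPlane' {z : ℂ | |z.re| < Real.pi / 2})
    (hmaps : Set.MapsTo (fun z => Complex.sinh (Complex.I * z))
      {z : ℂ | |z.re| < Real.pi / 2} slitPlane') :
    (∀ K : Set ℝ, IsCompact K → K ⊆ Set.Ioi (0 : ℝ) →
      IntegrableOn
        (fun p : ℝ × ℝ => ‖F (ψ ((p.1 : ℂ) + (p.2 : ℂ) * Complex.I))‖)
        (K ×ˢ (Set.univ : Set ℝ))) ∧
    (∀ K : Set ℝ, IsCompact K → K ⊆ Set.Iio (0 : ℝ) →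
      IntegrableOn
        (fun p : ℝ × ℝ => ‖F (ψ ((p.1 : ℂ) + (p.2 : ℂ) * Complex.I))‖)
        (K ×ˢ (Set.univ : Set ℝ))) := by
  have h1α : (0:ℝ) < 1 - α := by linarith [hα.2]
  have hq : (0:ℝ) < 1 / (1 - α) := by positivity
  have hp1 : (1:ℝ) < 1 / β := one_lt_one_div hβ.1 hβ.2
  have hp0 : (0:ℝ) < 1 / β := lt_trans one_pos hp1
  set p : ℝ := 1 / β with hp_def
  set q : ℝ := 1 / (1 - α) with hq_def
  set D : ℝ := C * Real.exp (b * (Real.pi / 2) ^ q) with hD_def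
  have hD : 0 < D := by positivity
  set G : ℝ → ℝ := fun η => D * Real.exp (-a * (Real.log (max |η| 1)) ^ p) with hG_def
  -- membership of vertical lines off the imaginary axis
  have hmemd : ∀ (ξ η : ℝ), ξ ≠ 0 → ((ξ:ℂ) + (η:ℂ) * I) ∈ slitPlane' := by
    intro ξ η hξ
    apply mem_slitPlane'_of_re_ne_zero
    simpa using hξ
  -- the pointwise bound
  have key_bound : ∀ (ξ η : ℝ), ξ ≠ 0 →
      ‖F (ψ ((ξ:ℂ) + (η:ℂ) * I))‖ ≤ G η := by
    intro ξ η hξ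
    have hw : ((ξ:ℂ) + (η:ℂ) * I) ∈ slitPlane' := hmemd ξ η hξ
    set w : ℂ := (ξ:ℂ) + (η:ℂ) * I with hw_def
    set z : ℂ := ψ w with hz_def
    have hzs : |z.re| < Real.pi / 2 := hψmaps hw
    have hfz : Complex.sinh (I * z) = w := hψinv.2 hw
    have hwim : w.im = η := by simp [hw_def]
    have h1 : Complex.sinh (I * z) = Complex.sin z * I := by
      rw [mul_comm, Complex.sinh_mul_I]
    have h2 : (Complex.sin z).re = Real.sin z.re * Real.cosh z.im := by
      rw [Complex.sin_eq]
      simp [Complex.mul_re, Complex.mul_im, Complex.sin_ofReal_re, Complex.sin_ofReal_im,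
        Complex.cos_ofReal_re, Complex.cos_ofReal_im, Complex.sinh_ofReal_re,
        Complex.sinh_ofReal_im, Complex.cosh_ofReal_re, Complex.cosh_ofReal_im]
    have hη : η = Real.sin z.re * Real.cosh z.im := by
      rw [← hwim, ← hfz, h1, Complex.mul_I_im, h2]
    have hcosh : |η| ≤ Real.cosh z.im := by
      rw [hη, abs_mul, _root_.abs_of_pos (Real.cosh_pos _)]
      exact mul_le_of_le_one_left (Real.cosh_pos _).le (Real.abs_sin_le_one _)
    have hexp : Real.cosh z.im ≤ Real.exp |z.im| := by
      rw [Real.cosh_eq]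
      have h1' := Real.exp_le_exp.2 (le_abs_self z.im)
      have h2' := Real.exp_le_exp.2 (neg_abs_le z.im)
      have h3' := Real.exp_le_exp.2 (neg_le_abs z.im)
      linarith
    have hmax : max |η| 1 ≤ Real.exp |z.im| :=
      max_le (hcosh.trans hexp) (Real.one_le_exp (abs_nonneg _))
    have hlog : Real.log (max |η| 1) ≤ |z.im| := by
      have h0 : (0:ℝ) < max |η| 1 := lt_of_lt_of_le one_pos (le_max_right _ _)
      rw [Real.log_le_iff_le_exp h0]
      exact hmax
    have hlognn : 0 ≤ Real.log (max |η| 1) := Real.log_nonneg (le_max_right _ _)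
    have hpow1 : Real.log (max |η| 1) ^ p ≤ |z.im| ^ p :=
      Real.rpow_le_rpow hlognn hlog hp0.le
    have hpow2 : |z.re| ^ q ≤ (Real.pi / 2) ^ q :=
      Real.rpow_le_rpow (abs_nonneg _) hzs.le hq.le
    calc ‖F z‖ = ‖F ((z.re : ℂ) + (z.im : ℂ) * I)‖ := by
          rw [Complex.re_add_im]
      _ ≤ C * Real.exp (-a * |z.im| ^ (1/β) + b * |z.re| ^ (1/(1-α))) := hbound z.re z.im
      _ ≤ C * Real.exp (-a * (Real.log (max |η| 1)) ^ p + b * (Real.pi / 2) ^ q) := by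
          apply mul_le_mul_of_nonneg_left _ hC.le
          apply Real.exp_le_exp.2
          have t1 := mul_le_mul_of_nonneg_left hpow1 ha.le
          have t2 := mul_le_mul_of_nonneg_left hpow2 hb.le
          rw [hp_def, hq_def] at *
          linarith
      _ = G η := by rw [hG_def, hD_def, Real.exp_add]; ring
  -- integrability of the bound
  have hGmeas : Continuous G := by
    have hmaxc : Continuous fun η : ℝ => max |η| 1 := (continuous_abs.max continuous_const)
    have hlogc : Continuous fun η : ℝ => Real.log (max |η| 1) := by
      rw [continuous_iff_continuousAt]
      intro x
      exact (Real.continuousAt_log (by positivity)).comp hmaxc.continuousAt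
    exact continuous_const.mul
      ((continuous_const.mul (hlogc.rpow_const fun x => Or.inr hp0.le)).rexp)
  have hGint : Integrable G (volume : Measure ℝ) := by
    set s0 : ℝ := (4 / a) ^ (1 / (p - 1)) with hs0_def
    have hs0pos : 0 < s0 := Real.rpow_pos_of_pos (by positivity) _
    set M : ℝ := 2 * D * Real.exp (2 * s0) with hM_def
    apply Integrable.mono' ((integrable_inv_one_add_sq).const_mul M)
      hGmeas.aestronglyMeasurable
    filter_upwards with η
    have hGnn : 0 ≤ G η := by rw [hG_def]; positivity
    rw [Real.norm_eq_abs, _root_.abs_of_nonneg hGnn]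
    have hpos : (0:ℝ) < 1 + η ^ 2 := by positivity
    rw [← div_eq_mul_inv, le_div_iff₀ hpos]
    rcases le_or_gt |η| 1 with hcase | hcase
    · have hmax : max |η| 1 = 1 := max_eq_right hcase
      have hGeq : G η = D := by
        rw [hG_def]
        simp only [hmax, Real.log_one, Real.zero_rpow (ne_of_gt hp0), mul_zero, Real.exp_zero,
          mul_one]
      have hη2 : η ^ 2 ≤ 1 := by
        rw [← _root_.sq_abs]
        exact pow_le_one₀ (abs_nonneg _) hcase
      have hexp1 : (1:ℝ) ≤ Real.exp (2 * s0) := Real.one_le_exp (by positivity)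
      rw [hGeq, hM_def]
      nlinarith
    · have h0 : (0:ℝ) < |η| := lt_trans one_pos hcase
      have hmax : max |η| 1 = |η| := max_eq_left hcase.le
      set s : ℝ := Real.log |η| with hs_def
      have hs : 0 ≤ s := Real.log_nonneg hcase.le
      have hexps : Real.exp s = |η| := Real.exp_log h0
      have hη2 : η ^ 2 = Real.exp (2 * s) := by
        rw [← _root_.sq_abs, sq, ← hexps, two_mul, Real.exp_add]
      have hη2ge : (1:ℝ) ≤ η ^ 2 := by
        rw [← _root_.sq_abs]
        nlinarith
      have key : Real.exp (-a * s ^ p) * Real.exp (2 * s) ≤ Real.exp (2 * s0) := by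
        rw [← Real.exp_add]
        apply Real.exp_le_exp.2
        rcases le_or_gt s s0 with hss | hss
        · have h1' : 0 ≤ a * s ^ p := by positivity
          nlinarith
        · have hspos : 0 < s := hs0pos.trans hss
          have hpm1 : 0 < p - 1 := by linarith
          have hb1 : s0 ^ (p - 1) = 4 / a := by
            rw [hs0_def, ← Real.rpow_mul (by positivity : (0:ℝ) ≤ 4 / a),
              one_div_mul_cancel (ne_of_gt hpm1), Real.rpow_one]
          have hmono : (4:ℝ) / a ≤ s ^ (p - 1) := by
            rw [← hb1]
            exact Real.rpow_le_rpow hs0pos.le hss.le hpm1.le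
          have h4 : (4:ℝ) ≤ a * s ^ (p - 1) := by
            have := mul_le_mul_of_nonneg_left hmono ha.le
            rwa [mul_div_cancel₀ 4 (ne_of_gt ha)] at this
          have hsp : s ^ p = s ^ (p - 1) * s := by
            have : s ^ (p - 1 + 1) = s ^ (p - 1) * s := Real.rpow_add_one (ne_of_gt hspos) _
            simpa using this
          have h4s : 4 * s ≤ a * s ^ p := by
            rw [hsp]
            nlinarith [mul_le_mul_of_nonneg_right h4 hspos.le]
          linarith [h4s, hspos.le, hs0pos.le]
      have hGeq : G η = D * Real.exp (-a * s ^ p) := by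
        rw [hG_def]; simp only [hmax, hs_def]
      rw [hGeq, hη2, hM_def]
      have hE1 : 0 < Real.exp (-a * s ^ p) := Real.exp_pos _
      have hE2 : (1:ℝ) ≤ Real.exp (2 * s) := Real.one_le_exp (by positivity)
      calc D * Real.exp (-a * s ^ p) * (1 + Real.exp (2 * s))
          ≤ D * Real.exp (-a * s ^ p) * (2 * Real.exp (2 * s)) :=
            mul_le_mul_of_nonneg_left (by linarith) (by positivity)
        _ = 2 * (D * (Real.exp (-a * s ^ p) * Real.exp (2 * s))) := by ring
        _ ≤ 2 * (D * Real.exp (2 * s0)) := by linarith [mul_le_mul_of_nonneg_left key hD.le]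
        _ = 2 * D * Real.exp (2 * s0) := by ring
  -- measurability of the composed function, via Lusin–Souslin
  have hstrip : MeasurableSet {z : ℂ | |z.re| < Real.pi / 2} :=
    (isOpen_lt (continuous_abs.comp Complex.continuous_re) continuous_const).measurableSet
  have hinj : Set.InjOn (fun z => Complex.sinh (Complex.I * z)) {z : ℂ | |z.re| < Real.pi / 2} :=
    hψinv.1.injOn
  have hΨ : Measurable (slitPlane'.indicator ψ) := by
    intro t ht
    have him : slitPlane' ∩ ψ ⁻¹' t =
        (fun z => Complex.sinh (Complex.I * z)) '' ({z : ℂ | |z.re| < Real.pi / 2} ∩ t) := by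
      ext w
      constructor
      · rintro ⟨hw, hwt⟩
        exact ⟨ψ w, ⟨hψmaps hw, hwt⟩, hψinv.2 hw⟩
      · rintro ⟨z, ⟨hz, hzt⟩, rfl⟩
        refine ⟨hmaps hz, ?_⟩
        rw [Set.mem_preimage, hψinv.1 hz]
        exact hzt
    have himm : MeasurableSet (ψ ⁻¹' t ∩ slitPlane') := by
      rw [Set.inter_comm, him]
      exact (hstrip.inter ht).image_of_continuousOn_injOn
        ((Complex.continuous_sinh.comp (continuous_const.mul continuous_id)).continuousOn)
        (hinj.mono Set.inter_subset_left)
    rw [Set.indicator_preimage]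
    refine MeasurableSet.union himm ?_
    exact (measurable_const ht).diff measurableSet_slitPlane'
  have hφ : Measurable fun pp : ℝ × ℝ => ((pp.1 : ℂ) + (pp.2 : ℂ) * I) := by
    exact ((Complex.continuous_ofReal.comp continuous_fst).add
      ((Complex.continuous_ofReal.comp continuous_snd).mul continuous_const)).measurable
  have hg : Measurable fun pp : ℝ × ℝ =>
      ‖F (slitPlane'.indicator ψ ((pp.1 : ℂ) + (pp.2 : ℂ) * I))‖ :=
    (continuous_norm.comp hF.continuous).measurable.comp (hΨ.comp hφ)
  -- general claim
  have key : ∀ K : Set ℝ, IsCompact K → (∀ x ∈ K, x ≠ 0) →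
      IntegrableOn
        (fun pp : ℝ × ℝ => ‖F (ψ ((pp.1 : ℂ) + (pp.2 : ℂ) * Complex.I))‖)
        (K ×ˢ (Set.univ : Set ℝ)) := by
    intro K hK hK0
    have hKm : MeasurableSet K := hK.measurableSet
    have hset : MeasurableSet (K ×ˢ (Set.univ : Set ℝ)) := hKm.prod MeasurableSet.univ
    rw [IntegrableOn, MeasureTheory.Measure.volume_eq_prod]
    have hGprod : Integrable (fun pp : ℝ × ℝ => G pp.2)
        (((volume : Measure ℝ).prod (volume : Measure ℝ)).restrict
          (K ×ˢ (Set.univ : Set ℝ))) := by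
      rw [← Measure.prod_restrict, Measure.restrict_univ]
      have h1int : Integrable (fun _ : ℝ => (1:ℝ)) ((volume : Measure ℝ).restrict K) :=
        integrableOn_const hK.measure_lt_top.ne
      have := h1int.mul_prod hGint
      simpa using this
    apply Integrable.mono' hGprod
    · apply hg.aestronglyMeasurable.congr
      filter_upwards [self_mem_ae_restrict hset] with pp hpp
      rcases hpp with ⟨h1, -⟩
      have hw : ((pp.1 : ℂ) + (pp.2 : ℂ) * I) ∈ slitPlane' := hmemd pp.1 pp.2 (hK0 pp.1 h1)
      rw [Set.indicator_of_mem hw]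
    · filter_upwards [self_mem_ae_restrict hset] with pp hpp
      rcases hpp with ⟨h1, -⟩
      rw [Real.norm_eq_abs, _root_.abs_of_nonneg (norm_nonneg _)]
      exact key_bound pp.1 pp.2 (hK0 pp.1 h1)
  exact ⟨fun K hK hK' => key K hK (fun x hx => ne_of_gt (hK' hx)),
    fun K hK hK' => key K hK (fun x hx => ne_of_lt (hK' hx))⟩
end
end
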